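/- For the algebraic Kuramoto system at ω = (0,0): the system (s₁c₂ − c₁s₂) + s₁ = 0, (s₂c₁ − c₂s₁) + s₂ = 0, s₁² + c₁² = 1, s₂² + c₂² = 1 has exactly 6 real solutions, namely (0,1,0,1), (0,1,0,−1), (0,−1,0,1), (0,−1,0,−1), (√3/2,−1/2,−√3/2,−1/2), (−√3/2,−1/2,√3/2,−1/2). -/
import Mathlib


theorem stmt_15 :
    {v : ℝ × ℝ × ℝ × ℝ |
        (v.1 * v.2.2.2 - v.2.1 * v.2.2.1) + v.1 = 0 ∧
        (v.2.2.1 * v.2.1 - v.2.2.2 * v.1) + v.2.2.1 = 0 ∧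
        v.1 ^ 2 + v.2.1 ^ 2 = 1 ∧
        v.2.2.1 ^ 2 + v.2.2.2 ^ 2 = 1} =
      {((0 : ℝ), (1 : ℝ), (0 : ℝ), (1 : ℝ)), (0, 1, 0, -1), (0, -1, 0, 1), (0, -1, 0, -1),
        (Real.sqrt 3 / 2, -1 / 2, -(Real.sqrt 3) / 2, -1 / 2),
        (-(Real.sqrt 3) / 2, -1 / 2, Real.sqrt 3 / 2, -1 / 2)} := by
  have hr : Real.sqrt 3 ^ 2 = 3 := Real.sq_sqrt (by norm_num)
  ext ⟨s1, c1, s2, c2⟩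
  simp only [Set.mem_setOf_eq, Set.mem_insert_iff, Set.mem_singleton_iff, Prod.mk.injEq]
  constructor
  · rintro ⟨h1, h2, h3, h4⟩
    have hs : s2 = -s1 := by linear_combination h1 + h2
    subst hs
    have key : s1 * (c1 + c2 + 1) = 0 := by linear_combination h1
    rcases mul_eq_zero.mp key with h0 | hc
    · subst h0
      have hc1 : (c1 - 1) * (c1 + 1) = 0 := by linear_combination h3
      have hc2 : (c2 - 1) * (c2 + 1) = 0 := by linear_combination h4
      rcases mul_eq_zero.mp hc1 with h | h <;> rcases mul_eq_zero.mp hc2 with h' | h'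
      · exact Or.inl ⟨rfl, by linarith, by norm_num, by linarith⟩
      · exact Or.inr (Or.inl ⟨rfl, by linarith, by norm_num, by linarith⟩)
      · exact Or.inr (Or.inr (Or.inl ⟨rfl, by linarith, by norm_num, by linarith⟩))
      · exact Or.inr (Or.inr (Or.inr (Or.inl ⟨rfl, by linarith, by norm_num, by linarith⟩)))
    · have hc1 : c1 = -1/2 := by nlinarith [sq_nonneg (c1 - c2), sq_nonneg (c1 + c2)]
      have hc2 : c2 = -1/2 := by linarith
      have hsq : (s1 - Real.sqrt 3 / 2) * (s1 + Real.sqrt 3 / 2) = 0 := by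
        nlinarith [hr]
      rcases mul_eq_zero.mp hsq with h | h
      · right; right; right; right; left
        refine ⟨by linarith, hc1, by linarith, hc2⟩
      · right; right; right; right; right
        refine ⟨by linarith, hc1, by linarith, hc2⟩
  · have hnn := Real.sqrt_nonneg 3
    rintro (⟨e1,e2,e3,e4⟩|⟨e1,e2,e3,e4⟩|⟨e1,e2,e3,e4⟩|⟨e1,e2,e3,e4⟩|⟨e1,e2,e3,e4⟩|⟨e1,e2,e3,e4⟩) <;>
      subst e1 <;> subst e2 <;> subst e3 <;> subst e4 <;>
      refine ⟨by ring, by ring, by nlinarith, by nlinarith⟩
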